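/- (Transfinite recursion for ordinal systems.) Let O be an ordinal system relative to a universe 𝒰, let X be a set, T : X → X a function, and V : P_𝒰(X) → X a function. Then there exists a unique function f : O → X satisfying: (R1) f(x⁺) = T(f(x)) for every x ∈ O, and (R2) f(x) = V({f(y) | y < x}) for every limit ordinal x ∈ O. -/

import Mathlib

namespace Paper

/-- The union `⋃_{i ∈ I} f(i)` of the values of `f` on elements of `I`. -/
noncomputable def unionImage (f : ZFSet → ZFSet) (I : ZFSet) : ZFSet :=
  ZFSet.sUnion (@ZFSet.image f (Classical.allZFSetDefinable _) I)

/-- A universe: a transitive set closed under pairing and under unions of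
`𝒰`-indexed families of elements of `𝒰`. -/
def IsUniverse (U : ZFSet) : Prop :=
  U.IsTransitive ∧
  (∀ x ∈ U, ∀ y ∈ U, ({x, y} : ZFSet) ∈ U) ∧
  (∀ I ∈ U, ∀ f : ZFSet → ZFSet, (∀ i ∈ I, f i ∈ U) → unionImage f I ∈ U)

variable {X : Type*}

/-- `A ∈ P_𝒰(X)`: the subset `A` of the type `X` is in bijection with some element of `𝒰`. -/
def SmallSet (U : ZFSet) (A : Set X) : Prop :=
  ∃ B : ZFSet, B ∈ U ∧ Nonempty (A ≃ B.toSet)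

/-- `x < y` in the sense `x ≤ y ∧ x ≠ y`, for an arbitrary relation `le`. -/
def ltR (le : X → X → Prop) (x y : X) : Prop := le x y ∧ x ≠ y

/-- The lower complement `S^↧ = {x | ∀ y ∈ S, x < y}`. -/
def lowerComp (le : X → X → Prop) (S : Set X) : Set X := {x | ∀ y ∈ S, ltR le x y}

/-- The upper complement `S^↑ = {x | ∀ y ∈ S, y < x}`. -/
def upperComp (le : X → X → Prop) (S : Set X) : Set X := {x | ∀ y ∈ S, ltR le y x}

/-- `b` is the incremented join `⋁⁺S`, i.e. the minimum of `S^↑`. -/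
def IsIncJoin (le : X → X → Prop) (S : Set X) (b : X) : Prop :=
  b ∈ upperComp le S ∧ ∀ c ∈ upperComp le S, le b c

/-- `b = x⁺`, i.e. `b = ⋁⁺{x}`. -/
def IsSuccOf (le : X → X → Prop) (x b : X) : Prop := IsIncJoin le {x} b

/-- `b` is the join (least upper bound) of `S`. -/
def IsJoin (le : X → X → Prop) (S : Set X) (b : X) : Prop :=
  (∀ y ∈ S, le y b) ∧ ∀ c, (∀ y ∈ S, le y c) → le b c

/-- An ordinal system relative to the universe `U`: a partial order satisfying
(O1) lower complements of nonempty subsets lie in `P_𝒰(X)`, and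
(O2) every member of `P_𝒰(X)` has an incremented join. -/
def IsOrdinalSystem (U : ZFSet) (le : X → X → Prop) : Prop :=
  IsPartialOrder X le ∧
  (∀ S : Set X, S.Nonempty → SmallSet U (lowerComp le S)) ∧
  (∀ S : Set X, SmallSet U S → ∃ b, IsIncJoin le S b)


-- membership in unionImage
lemma mem_unionImage {f : ZFSet → ZFSet} {I z : ZFSet} :
    z ∈ unionImage f I ↔ ∃ i ∈ I, z ∈ f i := by
  unfold unionImage
  rw [ZFSet.mem_sUnion]
  constructor
  · rintro ⟨w, hw, hzw⟩
    rw [@ZFSet.mem_image f (Classical.allZFSetDefinable _)] at hw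
    rcases hw with ⟨i, hi, rfl⟩
    exact ⟨i, hi, hzw⟩
  · rintro ⟨i, hi, hz⟩
    refine ⟨f i, ?_, hz⟩
    rw [@ZFSet.mem_image f (Classical.allZFSetDefinable _)]
    exact ⟨i, hi, rfl⟩

lemma empty_mem_of_mem {U : ZFSet} (hT : U.IsTransitive) :
    ∀ x : ZFSet, x ∈ U → (∅ : ZFSet) ∈ U := by
  intro x
  induction x using ZFSet.inductionOn with
  | h x ih =>
    intro hx
    rcases ZFSet.eq_empty_or_nonempty x with rfl | ⟨y, hy⟩
    · exact hx
    · exact ih y hy (hT x hx hy)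

lemma singleton_mem {U : ZFSet} (hU : IsUniverse U) {i : ZFSet} (hi : i ∈ U) :
    ({i} : ZFSet) ∈ U := by
  have := hU.2.1 i hi i hi
  have h2 : ({i, i} : ZFSet) = {i} := by
    ext z; simp
  rwa [h2] at this

open Classical in
lemma subset_mem {U : ZFSet} (hU : IsUniverse U) (h0 : (∅ : ZFSet) ∈ U)
    {B B' : ZFSet} (hB : B ∈ U) (hs : B' ⊆ B) : B' ∈ U := by
  have key : unionImage (fun i => if i ∈ B' then ({i} : ZFSet) else ∅) B = B' := by
    apply ZFSet.ext
    intro z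
    rw [mem_unionImage]
    constructor
    · rintro ⟨i, hi, hz⟩
      by_cases h : i ∈ B'
      · rw [if_pos h, ZFSet.mem_singleton] at hz
        subst hz; exact h
      · rw [if_neg h] at hz
        exact absurd hz (ZFSet.notMem_empty z)
    · intro hz
      refine ⟨z, hs hz, ?_⟩
      rw [if_pos hz]
      exact ZFSet.mem_singleton.2 rfl
  rw [← key]
  exact hU.2.2 B hB _ (fun i _ => by
    by_cases h : i ∈ B'
    · rw [if_pos h]; exact singleton_mem hU (hU.1 B hB (hs h))
    · rw [if_neg h]; exact h0)

lemma ZFSet.mem_toSet (x y : ZFSet) : x ∈ y.toSet ↔ x ∈ y := Iff.rfl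

lemma small_of_inj_to {U : ZFSet} (hU : IsUniverse U) (h0 : (∅ : ZFSet) ∈ U)
    {B : ZFSet} (hB : B ∈ U) {W : Type*} {C : Set W}
    (ι : C → B.toSet) (hι : Function.Injective ι) : SmallSet U C := by
  classical
  set B' : ZFSet := ZFSet.sep (fun b => ∃ c : C, (ι c : ZFSet) = b) B with hB'def
  have hB'sub : B' ⊆ B := fun z hz => (ZFSet.mem_sep.1 hz).1
  refine ⟨B', subset_mem hU h0 hB hB'sub, ⟨?_⟩⟩
  refine Equiv.ofBijective (fun c => ⟨(ι c : ZFSet), ?_⟩) ⟨?_, ?_⟩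
  · rw [ZFSet.mem_toSet, hB'def, ZFSet.mem_sep]
    exact ⟨(ZFSet.mem_toSet _ _).1 (ι c).2, c, rfl⟩
  · intro c₁ c₂ h
    apply hι
    have h' := congrArg Subtype.val h
    simp only at h'
    exact Subtype.ext h'
  · rintro ⟨b, hb⟩
    rw [ZFSet.mem_toSet, hB'def, ZFSet.mem_sep] at hb
    obtain ⟨hbB, c, hc⟩ := hb
    exact ⟨c, Subtype.ext hc⟩

lemma small_image {U : ZFSet} (hU : IsUniverse U) (h0 : (∅ : ZFSet) ∈ U)
    {A : Set X} (hA : SmallSet U A) {W : Type*} (g : X → W) :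
    SmallSet U (g '' A) := by
  classical
  obtain ⟨B, hB, ⟨e⟩⟩ := hA
  have sel : ∀ w : (g '' A), ∃ a : A, g a = w := by
    rintro ⟨w, a, ha, rfl⟩
    exact ⟨⟨a, ha⟩, rfl⟩
  choose s hs using sel
  refine small_of_inj_to hU h0 hB (fun w => e (s w)) ?_
  intro w₁ w₂ h
  have : s w₁ = s w₂ := e.injective h
  apply Subtype.ext
  rw [← hs w₁, ← hs w₂, this]

lemma small_empty {U : ZFSet} (h0 : (∅ : ZFSet) ∈ U) :
    SmallSet U (∅ : Set X) := by
  have : IsEmpty ((∅ : ZFSet).toSet : Type _) := by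
    constructor
    rintro ⟨z, hz⟩
    exact ZFSet.notMem_empty z ((ZFSet.mem_toSet _ _).1 hz)
  exact ⟨∅, h0, ⟨Equiv.equivOfIsEmpty _ _⟩⟩


section OrderPart

variable {O : Type*} [PartialOrder O] {U : ZFSet}

lemma ltR_iff {x y : O} : ltR (· ≤ ·) x y ↔ x < y := by
  rw [lt_iff_le_and_ne]; rfl

lemma lowerComp_singleton (x : O) : lowerComp (· ≤ ·) ({x} : Set O) = {y | y < x} := by
  ext z
  simp only [lowerComp, Set.mem_setOf_eq, Set.mem_singleton_iff]
  constructor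
  · intro h; exact ltR_iff.1 (h x rfl)
  · intro h y hy; subst hy; exact ltR_iff.2 h

lemma exists_min (hO : IsOrdinalSystem U ((· ≤ ·) : O → O → Prop)) {S : Set O}
    (hS : S.Nonempty) : ∃ m ∈ S, ∀ y ∈ S, m ≤ y := by
  obtain ⟨b, hb⟩ := hO.2.2 _ (hO.2.1 S hS)
  have hbS : ∀ y ∈ S, b ≤ y := fun y hy => hb.2 y (fun d hd => hd y hy)
  by_cases h : b ∈ S
  · exact ⟨b, h, hbS⟩
  · exfalso
    have hmem : b ∈ lowerComp (· ≤ ·) S := fun y hy => ⟨hbS y hy, fun e => h (e ▸ hy)⟩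
    exact (hb.1 b hmem).2 rfl

lemma wf_lt (hO : IsOrdinalSystem U ((· ≤ ·) : O → O → Prop)) :
    WellFounded ((· < ·) : O → O → Prop) := by
  rw [WellFounded.wellFounded_iff_has_min]
  intro s hs
  obtain ⟨m, hm, hmin⟩ := exists_min hO hs
  exact ⟨m, hm, fun x hx hlt => absurd (lt_of_lt_of_le hlt (hmin x hx)) (lt_irrefl x)⟩

lemma lt_of_isSuccOf {x b : O} (h : IsSuccOf (· ≤ ·) x b) : x < b :=
  ltR_iff.1 (h.1 x rfl)

lemma succ_unique (hO : IsOrdinalSystem U ((· ≤ ·) : O → O → Prop)) {y z b : O}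
    (h1 : IsSuccOf (· ≤ ·) y b) (h2 : IsSuccOf (· ≤ ·) z b) : y = z := by
  have key : ∀ y z : O, IsSuccOf (· ≤ ·) y b → IsSuccOf (· ≤ ·) z b → y ≤ z → y = z := by
    intro y z h1 h2 hle
    by_contra hne
    have hyz : y < z := lt_of_le_of_ne hle hne
    have hbz : b ≤ z := h1.2 z (fun w hw => by
      rw [Set.mem_singleton_iff] at hw; subst hw; exact ltR_iff.2 hyz)
    exact absurd (lt_of_lt_of_le (lt_of_isSuccOf h2) hbz) (lt_irrefl z)
  obtain ⟨m, hm, hmin⟩ := exists_min hO (S := {y, z}) ⟨y, Or.inl rfl⟩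
  rcases hm with rfl | rfl
  · exact key m z h1 h2 (hmin z (Or.inr rfl))
  · exact (key m y h2 h1 (hmin y (Or.inl rfl))).symm

end OrderPart

theorem stmt_13 {O : Type*} [PartialOrder O] (U : ZFSet) (hU : IsUniverse U)
    (hO : IsOrdinalSystem U ((· ≤ ·) : O → O → Prop))
    {X : Type*} (T : X → X) (V : (A : Set X) → SmallSet U A → X) :
    ∃! f : O → X,
      (∀ x b : O, IsSuccOf (· ≤ ·) x b → f b = T (f x)) ∧
      (∀ x : O, (¬ ∃ y, IsSuccOf (· ≤ ·) y x) →
        ∀ h : SmallSet U (Set.image f {y | y < x}), f x = V (Set.image f {y | y < x}) h) := by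
  classical
  have Vcongr : ∀ (A A' : Set X) h h', A = A' → V A h = V A' h' := by
    rintro A A' h h' rfl; rfl
  rcases isEmpty_or_nonempty O with hE | hNE
  · refine ⟨fun x => isEmptyElim x, ⟨?_, ?_⟩, ?_⟩
    · intro x; exact isEmptyElim x
    · intro x; exact isEmptyElim x
    · intro g _; funext x; exact isEmptyElim x
  · obtain ⟨x₀⟩ := hNE
    obtain ⟨B₀, hB₀, -⟩ := hO.2.1 ({x₀} : Set O) ⟨x₀, rfl⟩
    have h0 : (∅ : ZFSet) ∈ U := empty_mem_of_mem hU.1 B₀ hB₀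
    have x0 : X := V ∅ (small_empty h0)
    have wf := wf_lt hO
    have smalldown : ∀ x : O, SmallSet U {y : O | y < x} := fun x => by
      rw [← lowerComp_singleton]; exact hO.2.1 ({x} : Set O) ⟨x, rfl⟩
    let F : ∀ x : O, (∀ y : O, y < x → X) → X := fun x rec =>
      if h : ∃ y, IsSuccOf (· ≤ ·) y x then
        T (rec h.choose (lt_of_isSuccOf h.choose_spec))
      else
        V ((fun y => if hy : y < x then rec y hy else x0) '' {y : O | y < x})
          (small_image hU h0 (smalldown x) _)
    let f : O → X := wf.fix F
    have hfix : ∀ x, f x = F x (fun y _ => f y) := fun x => WellFounded.fix_eq wf F x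
    have hext : ∀ (r : O → X) (x : O),
        ((fun y => if hy : y < x then r y else x0) '' {y : O | y < x}) = r '' {y : O | y < x} :=
      fun r x => Set.image_congr (fun y hy => dif_pos hy)
    have R1 : ∀ x b : O, IsSuccOf (· ≤ ·) x b → f b = T (f x) := by
      intro x b hs
      have hex : ∃ y, IsSuccOf (· ≤ ·) y b := ⟨x, hs⟩
      have h1 := hfix b
      simp only [F, dif_pos hex] at h1
      rw [h1, show hex.choose = x from succ_unique hO hex.choose_spec hs]
    have R2 : ∀ x : O, (¬ ∃ y, IsSuccOf (· ≤ ·) y x) →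
        ∀ h : SmallSet U (Set.image f {y : O | y < x}),
          f x = V (Set.image f {y : O | y < x}) h := by
      intro x hlim h
      have h1 := hfix x
      simp only [F, dif_neg hlim] at h1
      rw [h1]
      exact Vcongr _ _ _ _ (hext f x)
    refine ⟨f, ⟨R1, R2⟩, ?_⟩
    intro g hg
    funext x
    refine wf.induction (C := fun x => g x = f x) x ?_
    intro x ih
    by_cases hex : ∃ y, IsSuccOf (· ≤ ·) y x
    · obtain ⟨y, hy⟩ := hex
      rw [hg.1 y x hy, R1 y x hy, ih y (lt_of_isSuccOf hy)]
    · have hsg : SmallSet U (Set.image g {y : O | y < x}) := small_image hU h0 (smalldown x) g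
      have hsf : SmallSet U (Set.image f {y : O | y < x}) := small_image hU h0 (smalldown x) f
      rw [hg.2 x hex hsg, R2 x hex hsf]
      exact Vcongr _ _ _ _ (Set.image_congr (fun y hy => ih y hy))

end Paper
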